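/- arXiv:1412.6493 — 2 statements merged into one kernel-verified Lean document; each statement's English description precedes it below -/
import Mathlib

section
/- Let ρ : ℝ^d → ℝ be a nonnegative integrable function (a spectral density) with ρ(−ω) = ρ(ω) for all ω, and define the translation-invariant kernel k(τ) = ∫_{ℝ^d} ρ(ω) cos⟨ω, τ⟩ dω. Then for every ε > 0 there exist Q ∈ ℕ, weights v_1², …, v_Q² ≥ 0, mean vectors μ_1, …, μ_Q ∈ ℝ^d, and positive reals σ_{q,1}², …, σ_{q,d}² (diagonal covariances Σ_q) such that the Gaussian spectral mixture kernel k_GM(τ) = Σ_{q=1}^Q v_q² exp(−(1/2) Σ_{i=1}^d σ_{q,i}² τ_i²) cos⟨τ, μ_q⟩ satisfies sup_{τ ∈ ℝ^d} |k(τ) − k_GM(τ)| < ε. -/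
open MeasureTheory Filter
open scoped RealInnerProductSpace FourierTransform Real

lemma cos_lip (a b : ℝ) : |Real.cos a - Real.cos b| ≤ |a - b| := by
  rw [Real.cos_sub_cos]
  have h1 : |Real.sin ((a+b)/2)| ≤ 1 := Real.abs_sin_le_one _
  have h2 : |Real.sin ((a-b)/2)| ≤ |(a-b)/2| := Real.abs_sin_le_abs
  have h3 : |(-2) * Real.sin ((a+b)/2) * Real.sin ((a-b)/2)|
      = 2 * (|Real.sin ((a+b)/2)| * |Real.sin ((a-b)/2)|) := by
    rw [abs_mul, abs_mul, abs_neg]; norm_num; ring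
  rw [h3]
  have h4 : |Real.sin ((a+b)/2)| * |Real.sin ((a-b)/2)| ≤ 1 * |(a-b)/2| :=
    mul_le_mul h1 h2 (abs_nonneg _) zero_le_one
  calc 2 * (|Real.sin ((a+b)/2)| * |Real.sin ((a-b)/2)|) ≤ 2 * (1 * |(a-b)/2|) := by linarith
    _ = |a - b| := by rw [one_mul, abs_div, abs_two]; ring

lemma one_sub_exp_le (x : ℝ) : 1 - Real.exp (-x) ≤ x := by
  nlinarith [Real.add_one_le_exp (-x)]

lemma mul_exp_le {σ : ℝ} (hσ : 0 < σ) (r : ℝ) :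
    r * Real.exp (-(1/2) * (σ^2 * r^2)) ≤ 1/σ := by
  have h1 : σ * r ≤ Real.exp ((1/2) * (σ^2 * r^2)) := by
    nlinarith [Real.add_one_le_exp ((1/2) * (σ^2 * r^2)), sq_nonneg (σ*r - 1)]
  have h2 : Real.exp (-(1/2) * (σ^2 * r^2)) = (Real.exp ((1/2) * (σ^2 * r^2)))⁻¹ := by
    rw [← Real.exp_neg]; ring_nf
  rw [h2, mul_inv_le_iff₀ (Real.exp_pos _), div_mul_eq_mul_div, le_div_iff₀ hσ]
  nlinarith

lemma riemann_lebesgue_cos {d : ℕ} (ρ : EuclideanSpace ℝ (Fin d) → ℝ)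
    (hρ : Integrable ρ) {ε : ℝ} (hε : 0 < ε) :
    ∃ T : ℝ, 0 < T ∧ ∀ τ : EuclideanSpace ℝ (Fin d), T ≤ ‖τ‖ →
      |∫ ω, ρ ω * Real.cos ⟪ω, τ⟫| < ε := by
  have hfi : Integrable (fun v : EuclideanSpace ℝ (Fin d) => (ρ v : ℂ)) := hρ.ofReal
  have htend := tendsto_integral_exp_inner_smul_cocompact (V := EuclideanSpace ℝ (Fin d)) (E := ℂ)
    (fun v => (ρ v : ℂ))
  have key : ∀ τ : EuclideanSpace ℝ (Fin d), ∫ ω, ρ ω * Real.cos ⟪ω, τ⟫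
      = RCLike.re (∫ v, 𝐞 (-⟪v, (-(2*π)⁻¹ : ℝ) • τ⟫) • (ρ v : ℂ)) := by
    intro τ
    have hint : Integrable (fun v : EuclideanSpace ℝ (Fin d) =>
        𝐞 (-⟪v, (-(2*π)⁻¹ : ℝ) • τ⟫) • (ρ v : ℂ)) :=
      (Real.fourierIntegral_convergent_iff _).2 hfi
    rw [← integral_re hint]
    congr 1
    ext v
    have h1 : -⟪v, (-(2*π)⁻¹ : ℝ) • τ⟫ = (2*π)⁻¹ * ⟪v, τ⟫ := by
      rw [real_inner_smul_right]; ring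
    rw [h1, Circle.smul_def, Real.fourierChar_apply]
    have h2 : 2 * π * ((2*π)⁻¹ * ⟪v, τ⟫) = ⟪v, τ⟫ := by
      field_simp
    rw [h2, RCLike.re_eq_complex_re, smul_eq_mul, Complex.mul_re, Complex.exp_ofReal_mul_I_re]
    simp [mul_comm]
  have hev : ∀ᶠ w in cocompact (EuclideanSpace ℝ (Fin d)),
      ‖∫ v, 𝐞 (-⟪v, w⟫) • (ρ v : ℂ)‖ < ε := by
    have := Metric.tendsto_nhds.mp htend ε hε
    simpa [dist_zero_right] using this
  rw [Filter.eventually_iff, Filter.mem_cocompact] at hev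
  obtain ⟨K, hK, hKsub⟩ := hev
  obtain ⟨r, hr⟩ := hK.isBounded.subset_closedBall 0
  refine ⟨(|r| + 1) * (2*π + 1), by positivity, fun τ hτ => ?_⟩
  set w : EuclideanSpace ℝ (Fin d) := (-(2*π)⁻¹ : ℝ) • τ with hw
  have hwnorm : ‖w‖ = (2*π)⁻¹ * ‖τ‖ := by
    rw [hw, norm_smul, Real.norm_eq_abs, abs_neg,
      abs_of_pos (inv_pos.2 (by positivity : (0:ℝ) < 2*π))]
  have hwK : w ∉ K := by
    intro hmem
    have h2 : (2*π)⁻¹ * ‖τ‖ ≤ r := by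
      have := hr hmem
      rwa [Metric.mem_closedBall, dist_zero_right, hwnorm] at this
    have hπ : (0:ℝ) < 2*π := by positivity
    have h1 : (|r| + 1) * (2*π + 1) ≤ ‖τ‖ := hτ
    have h3 : r ≤ |r| := le_abs_self r
    have h4 : (0:ℝ) ≤ |r| := abs_nonneg r
    have h5 : ‖τ‖ ≤ 2*π*r := by
      have := mul_le_mul_of_nonneg_left h2 hπ.le
      rwa [← mul_assoc, mul_inv_cancel₀ hπ.ne', one_mul] at this
    nlinarith [mul_le_mul_of_nonneg_left h3 hπ.le]
  have hb : ‖∫ v, 𝐞 (-⟪v, w⟫) • (ρ v : ℂ)‖ < ε := hKsub hwK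
  calc |∫ ω, ρ ω * Real.cos ⟪ω, τ⟫|
      = |RCLike.re (∫ v, 𝐞 (-⟪v, w⟫) • (ρ v : ℂ))| := by rw [key τ]
    _ ≤ ‖∫ v, 𝐞 (-⟪v, w⟫) • (ρ v : ℂ)‖ := by
        rw [RCLike.re_eq_complex_re]; exact Complex.abs_re_le_norm _
    _ < ε := hb
open MeasureTheory Filter

lemma tail_small {d : ℕ} (ρ : EuclideanSpace ℝ (Fin d) → ℝ)
    (hρ : Integrable ρ) (hρ_nonneg : ∀ ω, 0 ≤ ρ ω) {ε : ℝ} (hε : 0 < ε) :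
    ∃ R : ℝ, 1 ≤ R ∧ ∫ ω in (Metric.closedBall (0 : EuclideanSpace ℝ (Fin d)) R)ᶜ, ρ ω ≤ ε := by
  have hmono : Monotone (fun n : ℕ => Metric.closedBall (0 : EuclideanSpace ℝ (Fin d)) n) :=
    fun m n hmn => Metric.closedBall_subset_closedBall (by exact_mod_cast hmn)
  have hmeas : ∀ n : ℕ, MeasurableSet (Metric.closedBall (0 : EuclideanSpace ℝ (Fin d)) n) :=
    fun n => Metric.isClosed_closedBall.measurableSet
  have hunion : (⋃ n : ℕ, Metric.closedBall (0 : EuclideanSpace ℝ (Fin d)) n) = Set.univ :=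
    Metric.iUnion_closedBall_nat 0
  have htends := tendsto_setIntegral_of_monotone hmeas hmono (by rw [hunion]; exact hρ.integrableOn)
  rw [hunion, setIntegral_univ] at htends
  obtain ⟨n, hn⟩ := (Metric.tendsto_nhds.mp htends ε hε).exists
  rw [Real.dist_eq, abs_lt] at hn
  set R : ℝ := max (n : ℝ) 1 with hR
  refine ⟨R, le_max_right _ _, ?_⟩
  have hsub : Metric.closedBall (0 : EuclideanSpace ℝ (Fin d)) n ⊆
      Metric.closedBall 0 R := Metric.closedBall_subset_closedBall (le_max_left _ _)
  have h1 : ∫ ω in Metric.closedBall (0 : EuclideanSpace ℝ (Fin d)) n, ρ ω ≤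
      ∫ ω in Metric.closedBall (0 : EuclideanSpace ℝ (Fin d)) R, ρ ω :=
    setIntegral_mono_set hρ.integrableOn (Eventually.of_forall hρ_nonneg)
      (HasSubset.Subset.eventuallyLE hsub)
  have h2 : (∫ ω in Metric.closedBall (0 : EuclideanSpace ℝ (Fin d)) R, ρ ω)
      + ∫ ω in (Metric.closedBall (0 : EuclideanSpace ℝ (Fin d)) R)ᶜ, ρ ω = ∫ ω, ρ ω :=
    integral_add_compl Metric.isClosed_closedBall.measurableSet hρ
  linarith [hn.1]

set_option maxHeartbeats 2000000 in
/-- Universal Basis (Lemma 1): any translation-invariant kernel with nonnegative, symmetric,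
integrable spectral density can be uniformly approximated by Gaussian spectral mixture kernels
`k_GM τ = ∑ q, v_q² exp(-(1/2) ∑ i σ_{q,i}² τ_i²) cos ⟪τ, μ_q⟫`. -/
theorem gaussian_spectral_mixture_universal
    (d : ℕ) (ρ : EuclideanSpace ℝ (Fin d) → ℝ)
    (hρ_int : Integrable ρ) (hρ_nonneg : ∀ ω, 0 ≤ ρ ω)
    (hρ_symm : ∀ ω, ρ (-ω) = ρ ω)
    (k : EuclideanSpace ℝ (Fin d) → ℝ)
    (hk : ∀ τ, k τ = ∫ ω, ρ ω * Real.cos ⟪ω, τ⟫) :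
    ∀ ε > 0, ∃ (Q : ℕ) (v : Fin Q → ℝ) (μ : Fin Q → EuclideanSpace ℝ (Fin d))
      (σ : Fin Q → Fin d → ℝ), (∀ q i, 0 < σ q i) ∧
      ∀ τ : EuclideanSpace ℝ (Fin d),
        |k τ - ∑ q, (v q) ^ 2 *
            Real.exp (-(1 / 2) * ∑ i, (σ q i) ^ 2 * (τ i) ^ 2) *
            Real.cos ⟪τ, μ q⟫| < ε := by
  intro ε hε
  -- basic integrability
  have hintg : ∀ τ : EuclideanSpace ℝ (Fin d),
      Integrable (fun ω => ρ ω * Real.cos ⟪ω, τ⟫) := by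
    intro τ
    have hcont : Continuous fun ω : EuclideanSpace ℝ (Fin d) => Real.cos ⟪ω, τ⟫ :=
      Real.continuous_cos.comp (continuous_id.inner continuous_const)
    refine Integrable.mono' hρ_int.norm
      (hρ_int.aestronglyMeasurable.mul hcont.aestronglyMeasurable)
      (Filter.Eventually.of_forall fun ω => ?_)
    rw [Real.norm_eq_abs, Real.norm_eq_abs, abs_mul]
    exact mul_le_of_le_one_right (abs_nonneg _) (Real.abs_cos_le_one _)
  -- Step 1: Riemann-Lebesgue
  obtain ⟨T, hT_pos, hT⟩ := riemann_lebesgue_cos ρ hρ_int (by linarith : (0:ℝ) < ε/4)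
  -- Step 2: tail mass
  obtain ⟨R, hR1, hRtail⟩ := tail_small ρ hρ_int hρ_nonneg (by linarith : (0:ℝ) < ε/8)
  -- constants
  set M : ℝ := ∫ ω, ρ ω with hM
  have hM0 : 0 ≤ M := integral_nonneg hρ_nonneg
  set σ0 : ℝ := Real.sqrt (ε / (4*(M+1)*(T^2+1))) with hσ0def
  have hσ0 : 0 < σ0 := Real.sqrt_pos.2 (by positivity)
  have hσ0sq : σ0^2 = ε / (4*(M+1)*(T^2+1)) := Real.sq_sqrt (by positivity)
  have hσkey : M * (σ0^2 * T^2) ≤ ε/4 := by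
    rw [hσ0sq]
    have hX : (0:ℝ) < 4*(M+1)*(T^2+1) := by positivity
    have heq : M * (ε / (4*(M+1)*(T^2+1)) * T^2) = ε * (M * T^2) / (4*(M+1)*(T^2+1)) := by
      ring
    rw [heq, div_le_div_iff₀ hX (by norm_num : (0:ℝ) < 4)]
    nlinarith [mul_nonneg hε.le (sq_nonneg T), mul_nonneg hε.le hM0,
      mul_nonneg (mul_nonneg hε.le hM0) (sq_nonneg T)]
  have hsd : (0:ℝ) ≤ Real.sqrt d := Real.sqrt_nonneg _
  have hden : (0:ℝ) < 8 * (M+1) * (Real.sqrt d + 1) * (T + 1/σ0 + 1) := by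
    have h3 : 0 < T + 1/σ0 + 1 := by
      have := one_div_pos.2 hσ0
      linarith
    have h1 : (0:ℝ) < M + 1 := by linarith
    have h2 : (0:ℝ) < Real.sqrt d + 1 := by linarith
    positivity
  set δ : ℝ := ε / (8 * (M+1) * (Real.sqrt d + 1) * (T + 1/σ0 + 1)) with hδdef
  have hδ0 : 0 < δ := div_pos hε hden
  have hδnum : ∀ B : ℝ, 0 ≤ B → B ≤ T + 1/σ0 + 1 → M * (δ * Real.sqrt d) * B ≤ ε/8 := by
    intro B hB0 hBle
    have heq : M * (δ * Real.sqrt d) * B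
        = ε * (M * Real.sqrt d * B) / (8 * (M+1) * (Real.sqrt d + 1) * (T + 1/σ0 + 1)) := by
      rw [hδdef]; ring
    rw [heq, div_le_div_iff₀ hden (by norm_num : (0:ℝ) < 8)]
    have h1 : M * Real.sqrt d * B ≤ (M+1) * (Real.sqrt d + 1) * (T + 1/σ0 + 1) := by
      have s1 : M * Real.sqrt d ≤ (M+1) * (Real.sqrt d + 1) := by nlinarith
      have s3 : (0:ℝ) ≤ (M+1) * (Real.sqrt d + 1) := by nlinarith
      calc M * Real.sqrt d * B ≤ (M+1) * (Real.sqrt d + 1) * B :=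
            mul_le_mul_of_nonneg_right s1 hB0
        _ ≤ (M+1) * (Real.sqrt d + 1) * (T + 1/σ0 + 1) :=
            mul_le_mul_of_nonneg_left hBle s3
    have h2 : ε * (M * Real.sqrt d * B) ≤ ε * ((M+1) * (Real.sqrt d + 1) * (T + 1/σ0 + 1)) :=
      mul_le_mul_of_nonneg_left h1 hε.le
    nlinarith [h2]
  -- grid construction
  set L : ℝ := R + 1 with hLdef
  have hL2 : 2 ≤ L := by linarith
  obtain ⟨m, h, hm0, hh0, hhδ, hmh⟩ :
      ∃ (m : ℕ) (h : ℝ), 0 < m ∧ 0 < h ∧ h ≤ δ ∧ (m:ℝ) * h = 2*L := by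
    set n : ℕ := ⌈2*L/δ⌉₊ + 1 with hndef
    have hn0 : 0 < n := Nat.succ_pos _
    have hnR : (0:ℝ) < n := by exact_mod_cast hn0
    refine ⟨n, 2*L/n, hn0, div_pos (by linarith) hnR, ?_, by field_simp⟩
    rw [div_le_iff₀ hnR]
    have h1 : 2*L/δ ≤ (⌈2*L/δ⌉₊ : ℝ) := Nat.le_ceil _
    have h2 : ((⌈2*L/δ⌉₊ : ℕ) : ℝ) + 1 = (n:ℝ) := by rw [hndef]; push_cast; ring
    have h3 : 2*L/δ ≤ (n:ℝ) := by linarith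
    calc 2*L = (2*L/δ) * δ := by field_simp
      _ ≤ (n:ℝ) * δ := mul_le_mul_of_nonneg_right h3 hδ0.le
      _ = δ * n := by ring
  -- cells
  set C : (Fin d → Fin m) → Set (EuclideanSpace ℝ (Fin d)) := fun j =>
    {ω | ∀ i, ω i ∈ Set.Ico (-L + (j i : ℝ) * h) (-L + ((j i : ℝ) + 1) * h)} with hCdef
  set pt : (Fin d → Fin m) → EuclideanSpace ℝ (Fin d) := fun j =>
    (WithLp.equiv 2 (Fin d → ℝ)).symm (fun i => -L + (j i : ℝ) * h) with hptdef
  have hpt : ∀ j i, pt j i = -L + (j i : ℝ) * h := fun j i => rfl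
  set Cube : Set (EuclideanSpace ℝ (Fin d)) :=
    {ω | ∀ i, ω i ∈ Set.Ico (-L) L} with hCubedef
  have hCmeas : ∀ j, MeasurableSet (C j) := by
    intro j
    have : C j = ⋂ i, (fun ω : EuclideanSpace ℝ (Fin d) => ω i) ⁻¹'
        (Set.Ico (-L + (j i : ℝ) * h) (-L + ((j i : ℝ) + 1) * h)) := by
      ext ω; simp [hCdef, Set.mem_iInter]
    rw [this]
    exact MeasurableSet.iInter fun i => ((measurable_pi_apply i).comp (WithLp.measurable_ofLp 2 _)) measurableSet_Ico
  have hCubemeas : MeasurableSet Cube := by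
    have : Cube = ⋂ i, (fun ω : EuclideanSpace ℝ (Fin d) => ω i) ⁻¹' (Set.Ico (-L) L) := by
      ext ω; simp [hCubedef, Set.mem_iInter]
    rw [this]
    exact MeasurableSet.iInter fun i => ((measurable_pi_apply i).comp (WithLp.measurable_ofLp 2 _)) measurableSet_Ico
  have hcover : Cube = ⋃ j : Fin d → Fin m, C j := by
    ext ω
    constructor
    · intro hω
      have hnn : ∀ i, 0 ≤ (ω i + L)/h := fun i => div_nonneg (by linarith [(hω i).1]) hh0.le
      have hlt : ∀ i, ⌊(ω i + L)/h⌋₊ < m := by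
        intro i
        rw [Nat.floor_lt (hnn i), div_lt_iff₀ hh0]
        have h2 := (hω i).2
        linarith [hmh]
      refine Set.mem_iUnion.2 ⟨fun i => ⟨⌊(ω i + L)/h⌋₊, hlt i⟩, fun i => ?_⟩
      constructor
      · have h1 : (⌊(ω i + L)/h⌋₊ : ℝ) ≤ (ω i + L)/h := Nat.floor_le (hnn i)
        have h2 : (⌊(ω i + L)/h⌋₊ : ℝ) * h ≤ ω i + L := by
          rw [← le_div_iff₀ hh0]; exact h1
        simpa using by linarith
      · have h1 : (ω i + L)/h < (⌊(ω i + L)/h⌋₊ : ℝ) + 1 := Nat.lt_floor_add_one _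
        have h2 : ω i + L < ((⌊(ω i + L)/h⌋₊ : ℝ) + 1) * h := by
          rw [← div_lt_iff₀ hh0]; exact h1
        simpa using by linarith
    · intro hω
      obtain ⟨j, hj⟩ := Set.mem_iUnion.1 hω
      intro i
      have h1 := (hj i).1
      have h2 := (hj i).2
      have hj0 : (0:ℝ) ≤ (j i : ℝ) := Nat.cast_nonneg _
      have hjm : ((j i : ℝ) + 1) ≤ (m:ℝ) := by
        have : (j i : ℕ) < m := (j i).isLt
        exact_mod_cast Nat.succ_le_of_lt this
      constructor
      · have := mul_nonneg hj0 hh0.le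
        linarith
      · have h3 : ((j i : ℝ) + 1) * h ≤ (m:ℝ) * h :=
          mul_le_mul_of_nonneg_right hjm hh0.le
        linarith [hmh]
  have hdisj : Pairwise (Function.onFun Disjoint C) := by
    intro j j' hne
    rw [Function.onFun, Set.disjoint_left]
    intro ω hj hj'
    apply hne
    funext i
    have a1 := (hj i).1
    have a2 := (hj i).2
    have b1 := (hj' i).1
    have b2 := (hj' i).2
    have k1 : (j i : ℝ) * h < ((j' i : ℝ) + 1) * h := by linarith
    have k2 : (j' i : ℝ) * h < ((j i : ℝ) + 1) * h := by linarith
    have k1' : (j i : ℝ) < (j' i : ℝ) + 1 := lt_of_mul_lt_mul_right (by linarith) hh0.le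
    have k2' : (j' i : ℝ) < (j i : ℝ) + 1 := lt_of_mul_lt_mul_right (by linarith) hh0.le
    have n1 : (j i : ℕ) < (j' i : ℕ) + 1 := by exact_mod_cast k1'
    have n2 : (j' i : ℕ) < (j i : ℕ) + 1 := by exact_mod_cast k2'
    have : (j i : ℕ) = (j' i : ℕ) := by omega
    exact Fin.ext this
  -- coordinate bound and ball inside cube
  have hcoord : ∀ (ω : EuclideanSpace ℝ (Fin d)) (i : Fin d), |ω i| ≤ ‖ω‖ := by
    intro ω i
    rw [EuclideanSpace.norm_eq]
    have h1 : |ω i| = Real.sqrt (‖ω i‖^2) := by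
      rw [Real.sqrt_sq_eq_abs, Real.norm_eq_abs, abs_abs]
    rw [h1]
    exact Real.sqrt_le_sqrt (Finset.single_le_sum
      (f := fun i => ‖ω i‖^2) (fun i _ => sq_nonneg _) (Finset.mem_univ i))
  have hball : Metric.closedBall (0 : EuclideanSpace ℝ (Fin d)) R ⊆ Cube := by
    intro ω hω
    rw [Metric.mem_closedBall, dist_zero_right] at hω
    intro i
    have h1 : |ω i| ≤ R := le_trans (hcoord ω i) hω
    have h2 := abs_le.1 h1
    exact ⟨by simp only [hLdef]; linarith [h2.1], by simp only [hLdef]; linarith [h2.2]⟩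
  -- cell masses
  set w : (Fin d → Fin m) → ℝ := fun j => ∫ ω in C j, ρ ω with hwdef
  have hw0 : ∀ j, 0 ≤ w j := fun j => setIntegral_nonneg (hCmeas j) fun ω _ => hρ_nonneg ω
  have hsumρ : ∫ ω in Cube, ρ ω = ∑ j, w j := by
    rw [hcover]
    exact integral_iUnion_fintype hCmeas hdisj fun j => hρ_int.integrableOn
  have hMw : ∑ j, w j ≤ M := by
    rw [← hsumρ, hM]
    exact setIntegral_le_integral hρ_int (Filter.Eventually.of_forall hρ_nonneg)
  have hsplit : ∀ τ : EuclideanSpace ℝ (Fin d), ∫ ω in Cube, ρ ω * Real.cos ⟪ω, τ⟫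
      = ∑ j, ∫ ω in C j, ρ ω * Real.cos ⟪ω, τ⟫ := by
    intro τ
    rw [hcover]
    exact integral_iUnion_fintype hCmeas hdisj fun j => (hintg τ).integrableOn
  -- cell diameter bound
  have hcell : ∀ j, ∀ ω ∈ C j, ‖ω - pt j‖ ≤ δ * Real.sqrt d := by
    intro j ω hω
    rw [EuclideanSpace.norm_eq]
    have key : ∀ i, ‖(ω - pt j) i‖^2 ≤ δ^2 := by
      intro i
      have hsub : (ω - pt j) i = ω i - pt j i := rfl
      rw [hsub, Real.norm_eq_abs, hpt j i]
      have h1 := (hω i).1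
      have h2 := (hω i).2
      have habs : |ω i - (-L + (j i : ℝ) * h)| ≤ δ := by
        rw [abs_le]
        constructor <;> [linarith [hδ0.le]; linarith [hhδ]]
      have hnn := abs_nonneg (ω i - (-L + (j i : ℝ) * h))
      nlinarith
    calc Real.sqrt (∑ i, ‖(ω - pt j) i‖^2) ≤ Real.sqrt (∑ _i : Fin d, δ^2) :=
          Real.sqrt_le_sqrt (Finset.sum_le_sum fun i _ => key i)
      _ = Real.sqrt ((d:ℝ) * δ^2) := by
          rw [Finset.sum_const, Finset.card_univ, Fintype.card_fin, nsmul_eq_mul]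
      _ = δ * Real.sqrt d := by
          rw [Real.sqrt_mul (Nat.cast_nonneg d), Real.sqrt_sq hδ0.le]; ring
  -- per-cell estimate
  have hcellest : ∀ (τ : EuclideanSpace ℝ (Fin d)) j,
      |(∫ ω in C j, ρ ω * Real.cos ⟪ω, τ⟫) - w j * Real.cos ⟪pt j, τ⟫|
        ≤ w j * (δ * Real.sqrt d * ‖τ‖) := by
    intro τ j
    have e1 : w j * Real.cos ⟪pt j, τ⟫ = ∫ ω in C j, ρ ω * Real.cos ⟪pt j, τ⟫ :=
      (integral_mul_const _ _).symm
    have hint1 : IntegrableOn (fun ω => ρ ω * Real.cos ⟪ω, τ⟫) (C j) := (hintg τ).integrableOn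
    have hint2 : IntegrableOn (fun ω => ρ ω * Real.cos ⟪pt j, τ⟫) (C j) :=
      (hρ_int.mul_const _).integrableOn
    rw [e1, ← integral_sub hint1 hint2]
    have e2 := norm_integral_le_integral_norm (μ := volume.restrict (C j))
      (fun ω => ρ ω * Real.cos ⟪ω, τ⟫ - ρ ω * Real.cos ⟪pt j, τ⟫)
    rw [Real.norm_eq_abs] at e2
    refine le_trans e2 ?_
    have e3 : ∫ ω in C j, ‖ρ ω * Real.cos ⟪ω, τ⟫ - ρ ω * Real.cos ⟪pt j, τ⟫‖
        ≤ ∫ ω in C j, ρ ω * (δ * Real.sqrt d * ‖τ‖) := by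
      refine setIntegral_mono_on ((hint1.sub hint2).norm) (hρ_int.mul_const _).integrableOn
        (hCmeas j) ?_
      intro ω hω
      rw [Real.norm_eq_abs, ← mul_sub, abs_mul, abs_of_nonneg (hρ_nonneg ω)]
      refine mul_le_mul_of_nonneg_left ?_ (hρ_nonneg ω)
      calc |Real.cos ⟪ω, τ⟫ - Real.cos ⟪pt j, τ⟫| ≤ |⟪ω, τ⟫ - ⟪pt j, τ⟫| := cos_lip _ _
        _ = |⟪ω - pt j, τ⟫| := by rw [inner_sub_left]
        _ ≤ ‖ω - pt j‖ * ‖τ‖ := abs_real_inner_le_norm _ _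
        _ ≤ (δ * Real.sqrt d) * ‖τ‖ :=
            mul_le_mul_of_nonneg_right (hcell j ω hω) (norm_nonneg τ)
        _ = δ * Real.sqrt d * ‖τ‖ := by ring
    refine le_trans e3 ?_
    rw [integral_mul_const]
  -- main approximation bound
  have hA : ∀ τ : EuclideanSpace ℝ (Fin d),
      |k τ - ∑ j, w j * Real.cos ⟪pt j, τ⟫| ≤ ε/8 + M * (δ * Real.sqrt d) * ‖τ‖ := by
    intro τ
    have hsplit2 : k τ = (∫ ω in Cube, ρ ω * Real.cos ⟪ω, τ⟫)
        + ∫ ω in Cubeᶜ, ρ ω * Real.cos ⟪ω, τ⟫ := by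
      rw [hk τ, ← integral_add_compl hCubemeas (hintg τ)]
    have htail2 : |∫ ω in Cubeᶜ, ρ ω * Real.cos ⟪ω, τ⟫| ≤ ε/8 := by
      have b0 := norm_integral_le_integral_norm (μ := volume.restrict Cubeᶜ)
        (fun ω => ρ ω * Real.cos ⟪ω, τ⟫)
      rw [Real.norm_eq_abs] at b0
      have b1 : ∫ ω in Cubeᶜ, ‖ρ ω * Real.cos ⟪ω, τ⟫‖ ≤ ∫ ω in Cubeᶜ, ρ ω := by
        refine setIntegral_mono_on ((hintg τ).norm).integrableOn hρ_int.integrableOn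
          hCubemeas.compl ?_
        intro ω _
        rw [Real.norm_eq_abs, abs_mul, abs_of_nonneg (hρ_nonneg ω)]
        exact mul_le_of_le_one_right (hρ_nonneg ω) (Real.abs_cos_le_one _)
      have b2 : ∫ ω in Cubeᶜ, ρ ω ≤
          ∫ ω in (Metric.closedBall (0 : EuclideanSpace ℝ (Fin d)) R)ᶜ, ρ ω :=
        setIntegral_mono_set hρ_int.integrableOn
          (Filter.Eventually.of_forall hρ_nonneg)
          (HasSubset.Subset.eventuallyLE (Set.compl_subset_compl.2 hball))
      linarith
    have hmid : |(∫ ω in Cube, ρ ω * Real.cos ⟪ω, τ⟫) - ∑ j, w j * Real.cos ⟪pt j, τ⟫|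
        ≤ M * (δ * Real.sqrt d) * ‖τ‖ := by
      rw [hsplit τ, ← Finset.sum_sub_distrib]
      calc |∑ j, ((∫ ω in C j, ρ ω * Real.cos ⟪ω, τ⟫) - w j * Real.cos ⟪pt j, τ⟫)|
          ≤ ∑ j, |(∫ ω in C j, ρ ω * Real.cos ⟪ω, τ⟫) - w j * Real.cos ⟪pt j, τ⟫| :=
            Finset.abs_sum_le_sum_abs _ _
        _ ≤ ∑ j, w j * (δ * Real.sqrt d * ‖τ‖) :=
            Finset.sum_le_sum fun j _ => hcellest τ j
        _ = (∑ j, w j) * (δ * Real.sqrt d * ‖τ‖) := by rw [← Finset.sum_mul]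
        _ ≤ M * (δ * Real.sqrt d * ‖τ‖) := by
            refine mul_le_mul_of_nonneg_right hMw ?_
            have := norm_nonneg τ
            positivity
        _ = M * (δ * Real.sqrt d) * ‖τ‖ := by ring
    calc |k τ - ∑ j, w j * Real.cos ⟪pt j, τ⟫|
        = |((∫ ω in Cube, ρ ω * Real.cos ⟪ω, τ⟫) - ∑ j, w j * Real.cos ⟪pt j, τ⟫)
            + ∫ ω in Cubeᶜ, ρ ω * Real.cos ⟪ω, τ⟫| := by rw [hsplit2]; ring_nf
      _ ≤ |(∫ ω in Cube, ρ ω * Real.cos ⟪ω, τ⟫) - ∑ j, w j * Real.cos ⟪pt j, τ⟫|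
            + |∫ ω in Cubeᶜ, ρ ω * Real.cos ⟪ω, τ⟫| := abs_add_le _ _
      _ ≤ M * (δ * Real.sqrt d) * ‖τ‖ + ε/8 := add_le_add hmid htail2
      _ = ε/8 + M * (δ * Real.sqrt d) * ‖τ‖ := by ring
  -- norm-squared identity
  have hnormsq : ∀ τ : EuclideanSpace ℝ (Fin d), ∑ i, (τ i)^2 = ‖τ‖^2 := by
    intro τ
    rw [EuclideanSpace.norm_eq, Real.sq_sqrt (Finset.sum_nonneg fun i _ => sq_nonneg _)]
    exact Finset.sum_congr rfl fun i _ => by rw [Real.norm_eq_abs, sq_abs]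
  -- witnesses
  set e := (Fintype.equivFin (Fin d → Fin m)).symm with hedef
  refine ⟨Fintype.card (Fin d → Fin m), fun q => Real.sqrt (w (e q)), fun q => pt (e q),
    fun _ _ => σ0, fun _ _ => hσ0, ?_⟩
  intro τ
  have hexparg : (-(1/2 : ℝ) * ∑ i, σ0^2 * (τ i)^2) = -(1/2) * (σ0^2 * ‖τ‖^2) := by
    rw [← Finset.mul_sum, hnormsq τ]
  have hmix : (∑ q, (Real.sqrt (w (e q)))^2 * Real.exp (-(1/2 : ℝ) * ∑ i, σ0^2 * (τ i)^2)
        * Real.cos ⟪τ, pt (e q)⟫)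
      = Real.exp (-(1/2) * (σ0^2 * ‖τ‖^2)) * ∑ j, w j * Real.cos ⟪pt j, τ⟫ := by
    rw [hexparg, Finset.mul_sum, ← Equiv.sum_comp e
      (fun j => Real.exp (-(1/2) * (σ0^2 * ‖τ‖^2)) * (w j * Real.cos ⟪pt j, τ⟫))]
    refine Finset.sum_congr rfl fun q _ => ?_
    rw [Real.sq_sqrt (hw0 _), real_inner_comm]
    ring
  have hgoal : |k τ - ∑ q, (Real.sqrt (w (e q)))^2
      * Real.exp (-(1/2 : ℝ) * ∑ i, σ0^2 * (τ i)^2) * Real.cos ⟪τ, pt (e q)⟫| < ε := by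
    rw [hmix]
    set S : ℝ := ∑ j, w j * Real.cos ⟪pt j, τ⟫ with hSdef
    set G : ℝ := Real.exp (-(1/2) * (σ0^2 * ‖τ‖^2)) with hGdef
    have hG0 : 0 < G := Real.exp_pos _
    have hG1 : G ≤ 1 := by
      rw [hGdef]
      rw [Real.exp_le_one_iff]
      have := mul_nonneg (sq_nonneg σ0) (sq_nonneg ‖τ‖)
      linarith
    have h1G : 0 ≤ 1 - G := by linarith
    have hSM : |S| ≤ M := by
      rw [hSdef]
      calc |∑ j, w j * Real.cos ⟪pt j, τ⟫| ≤ ∑ j, |w j * Real.cos ⟪pt j, τ⟫| :=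
            Finset.abs_sum_le_sum_abs _ _
        _ ≤ ∑ j, w j := Finset.sum_le_sum fun j _ => by
            rw [abs_mul, abs_of_nonneg (hw0 j)]
            exact mul_le_of_le_one_right (hw0 j) (Real.abs_cos_le_one _)
        _ ≤ M := hMw
    have hAτ := hA τ
    have hMδd : 0 ≤ M * (δ * Real.sqrt d) := mul_nonneg hM0 (mul_nonneg hδ0.le hsd)
    rcases le_or_gt ‖τ‖ T with hcase | hcase
    · -- small τ
      have hb1 : |k τ - S| ≤ ε/8 + M * (δ * Real.sqrt d) * T := by
        have := mul_le_mul_of_nonneg_left hcase hMδd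
        linarith
      have hb1' : M * (δ * Real.sqrt d) * T ≤ ε/8 := by
        have hs : 0 < 1/σ0 := one_div_pos.2 hσ0
        exact hδnum T hT_pos.le (by linarith)
      have he1 : 1 - G ≤ (1/2) * (σ0^2 * ‖τ‖^2) := by
        have h := one_sub_exp_le ((1/2) * (σ0^2 * ‖τ‖^2))
        rw [← neg_mul] at h
        rw [hGdef]
        exact h
      have he2 : (1/2) * (σ0^2 * ‖τ‖^2) ≤ (1/2) * (σ0^2 * T^2) := by
        have hsq : ‖τ‖^2 ≤ T^2 := pow_le_pow_left₀ (norm_nonneg τ) hcase 2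
        nlinarith [sq_nonneg σ0]
      have hb2 : (1 - G) * |S| ≤ ε/8 := by
        have hfac : (0:ℝ) ≤ (1/2) * (σ0^2 * T^2) := by positivity
        have := mul_le_mul (he1.trans he2) hSM (abs_nonneg S) hfac
        nlinarith [hσkey]
      have tri : |k τ - G * S| ≤ |k τ - S| + |S - G * S| := abs_sub_le _ _ _
      have heq2 : |S - G * S| = (1 - G) * |S| := by
        rw [← abs_of_nonneg h1G, ← abs_mul]
        ring_nf
      rw [heq2] at tri
      linarith
    · -- large τ
      have hk4 : |k τ| < ε/4 := by rw [hk]; exact hT τ hcase.le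
      have hkey : k τ - G * S = (1 - G) * (k τ) + G * (k τ - S) := by ring
      have t1 : |(1 - G) * (k τ)| ≤ |k τ| := by
        rw [abs_mul, abs_of_nonneg h1G]
        nlinarith [abs_nonneg (k τ)]
      have t2 : |G * (k τ - S)| ≤ G * (ε/8 + M * (δ * Real.sqrt d) * ‖τ‖) := by
        rw [abs_mul, abs_of_pos hG0]
        exact mul_le_mul_of_nonneg_left hAτ hG0.le
      have t4 : G * (ε/8) ≤ ε/8 := mul_le_of_le_one_left (by linarith) hG1
      have t5 : ‖τ‖ * G ≤ 1/σ0 := by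
        rw [hGdef]
        exact mul_exp_le hσ0 ‖τ‖
      have t6 : (M * (δ * Real.sqrt d)) * (‖τ‖ * G) ≤ (M * (δ * Real.sqrt d)) * (1/σ0) :=
        mul_le_mul_of_nonneg_left t5 hMδd
      have t7 : M * (δ * Real.sqrt d) * (1/σ0) ≤ ε/8 := by
        refine hδnum (1/σ0) (one_div_pos.2 hσ0).le (by linarith)
      have t3 : G * (ε/8 + M * (δ * Real.sqrt d) * ‖τ‖)
          = G * (ε/8) + (M * (δ * Real.sqrt d)) * (‖τ‖ * G) := by ring
      have tri : |k τ - G * S| ≤ |(1 - G) * (k τ)| + |G * (k τ - S)| := by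
        rw [hkey]; exact abs_add_le _ _
      linarith
  exact hgoal
end

section
/- Let Q ∈ ℕ, v_q ∈ ℝ, μ_q ∈ ℝ^d, and σ_{q,1}, …, σ_{q,d} > 0 for q = 1, …, Q. Define k : ℝ^d × ℝ^d → ℝ by k(x, x') = Σ_{q=1}^Q v_q² exp(−(1/2) Σ_{i=1}^d σ_{q,i}² (x_i − x'_i)²) cos⟨x − x', μ_q⟩. Then k is a positive semidefinite kernel: for any points x_1, …, x_n ∈ ℝ^d and coefficients c_1, …, c_n ∈ ℝ, Σ_{i,j} c_i c_j k(x_i, x_j) ≥ 0. -/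
open scoped RealInnerProductSpace
open Finset

private lemma pow_sum_expand' {n : ℕ} {ι : Type*} [Fintype ι] [DecidableEq ι]
    (a : Fin n → ι → ℝ) (b : Fin n → ℝ) (m : ℕ) :
    ∑ i, ∑ j, b i * b j * (∑ t, a i t * a j t) ^ m
      = ∑ f : Fin m → ι, (∑ i, b i * ∏ r, a i (f r)) ^ 2 := by
  have h : ∀ i j : Fin n, (∑ t, a i t * a j t) ^ m
      = ∑ f : Fin m → ι, (∏ r, a i (f r)) * (∏ r, a j (f r)) := by
    intro i j
    have h0 : (∑ t, a i t * a j t) ^ m = ∏ _r : Fin m, ∑ t, a i t * a j t := by simp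
    rw [h0, Finset.prod_univ_sum (fun _ => Finset.univ) (fun r t => a i t * a j t),
      Fintype.piFinset_univ]
    exact Finset.sum_congr rfl fun f _ => by rw [Finset.prod_mul_distrib]
  have h2 : ∀ f : Fin m → ι, (∑ i, b i * ∏ r, a i (f r)) ^ 2
      = ∑ i, ∑ j, b i * b j * ((∏ r, a i (f r)) * ∏ r, a j (f r)) := by
    intro f
    rw [sq, Finset.sum_mul_sum]
    exact Finset.sum_congr rfl fun i _ => Finset.sum_congr rfl fun j _ => by ring
  simp_rw [h, Finset.mul_sum, h2]
  calc ∑ i, ∑ j, ∑ f : Fin m → ι, b i * b j * ((∏ r, a i (f r)) * ∏ r, a j (f r))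
      = ∑ i, ∑ f : Fin m → ι, ∑ j, b i * b j * ((∏ r, a i (f r)) * ∏ r, a j (f r)) :=
        Finset.sum_congr rfl fun i _ => Finset.sum_comm
    _ = ∑ f : Fin m → ι, ∑ i, ∑ j, b i * b j * ((∏ r, a i (f r)) * ∏ r, a j (f r)) :=
        Finset.sum_comm

private lemma exp_inner_psd' {n : ℕ} {ι : Type*} [Fintype ι] [DecidableEq ι]
    (a : Fin n → ι → ℝ) (b : Fin n → ℝ) :
    0 ≤ ∑ i, ∑ j, b i * b j * Real.exp (∑ t, a i t * a j t) := by
  have hexp : ∀ s : ℝ, Real.exp s = ∑' m : ℕ, s ^ m / m.factorial := by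
    intro s
    rw [Real.exp_eq_exp_ℝ, NormedSpace.exp_eq_tsum_div]
  have hsummable : ∀ i j : Fin n,
      Summable (fun m : ℕ => b i * b j * ((∑ t, a i t * a j t) ^ m / m.factorial)) :=
    fun i j => Summable.mul_left _ (Real.summable_pow_div_factorial _)
  have key : ∑ i, ∑ j, b i * b j * Real.exp (∑ t, a i t * a j t)
      = ∑' m : ℕ, ∑ i, ∑ j, b i * b j * ((∑ t, a i t * a j t) ^ m / m.factorial) := by
    rw [Summable.tsum_finsetSum fun i _ => summable_sum fun j _ => hsummable i j]
    refine Finset.sum_congr rfl fun i _ => ?_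
    rw [Summable.tsum_finsetSum fun j _ => hsummable i j]
    refine Finset.sum_congr rfl fun j _ => ?_
    rw [hexp, ← tsum_mul_left]
  rw [key]
  refine tsum_nonneg fun m => ?_
  have h3 : ∑ i, ∑ j, b i * b j * ((∑ t, a i t * a j t) ^ m / m.factorial)
      = (∑ i, ∑ j, b i * b j * (∑ t, a i t * a j t) ^ m) / m.factorial := by
    simp_rw [Finset.sum_div, mul_div_assoc]
  rw [h3, pow_sum_expand']
  positivity

private lemma sum_comm₃ {n m p : ℕ} (F : Fin n → Fin m → Fin p → ℝ) :
    ∑ i, ∑ j, ∑ q, F i j q = ∑ q, ∑ i, ∑ j, F i j q :=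
  (Finset.sum_congr rfl fun i _ => Finset.sum_comm).trans Finset.sum_comm

/-- The Gaussian spectral mixture kernel
`k(x,x') = ∑ q v_q² exp(-(1/2) ∑ i σ_{q,i}² (x_i - x'_i)²) cos⟪x - x', μ_q⟫`
is positive semidefinite. -/
theorem gaussian_spectral_mixture_posSemidef
    (d Q : ℕ) (v : Fin Q → ℝ) (μ : Fin Q → EuclideanSpace ℝ (Fin d))
    (σ : Fin Q → Fin d → ℝ) (hσ : ∀ q i, 0 < σ q i)
    (k : EuclideanSpace ℝ (Fin d) → EuclideanSpace ℝ (Fin d) → ℝ)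
    (hk : ∀ x x', k x x' = ∑ q, (v q) ^ 2 *
        Real.exp (-(1/2) * ∑ i, (σ q i) ^ 2 * (x i - x' i) ^ 2) *
        Real.cos ⟪x - x', μ q⟫) :
    ∀ (n : ℕ) (x : Fin n → EuclideanSpace ℝ (Fin d)) (c : Fin n → ℝ),
      0 ≤ ∑ i, ∑ j, c i * c j * k (x i) (x j) := by
  intro n x c
  simp_rw [hk]
  have hpull : ∀ i j : Fin n, c i * c j * (∑ q, (v q) ^ 2 *
        Real.exp (-(1/2) * ∑ t, (σ q t) ^ 2 * (x i t - x j t) ^ 2) *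
        Real.cos ⟪x i - x j, μ q⟫)
      = ∑ q, c i * c j * ((v q) ^ 2 *
        Real.exp (-(1/2) * ∑ t, (σ q t) ^ 2 * (x i t - x j t) ^ 2) *
        Real.cos ⟪x i - x j, μ q⟫) := by
    intro i j
    rw [Finset.mul_sum]
  simp_rw [hpull]
  rw [sum_comm₃]
  refine Finset.sum_nonneg fun q _ => ?_
  set a : Fin n → Fin d → ℝ := fun i t => σ q t * x i t with ha
  set b1 : Fin n → ℝ := fun i =>
    c i * v q * Real.exp (-(1/2) * ∑ t, (σ q t) ^ 2 * (x i t) ^ 2) * Real.cos ⟪x i, μ q⟫ with hb1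
  set b2 : Fin n → ℝ := fun i =>
    c i * v q * Real.exp (-(1/2) * ∑ t, (σ q t) ^ 2 * (x i t) ^ 2) * Real.sin ⟪x i, μ q⟫ with hb2
  have hterm : ∀ i j : Fin n, c i * c j *
        ((v q) ^ 2 * Real.exp (-(1/2) * ∑ t, (σ q t) ^ 2 * (x i t - x j t) ^ 2) *
          Real.cos ⟪x i - x j, μ q⟫)
      = b1 i * b1 j * Real.exp (∑ t, a i t * a j t)
        + b2 i * b2 j * Real.exp (∑ t, a i t * a j t) := by
    intro i j
    have e1 : (-(1/2) * ∑ t, (σ q t) ^ 2 * (x i t - x j t) ^ 2)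
        = (-(1/2) * ∑ t, (σ q t) ^ 2 * (x i t) ^ 2)
          + ((-(1/2) * ∑ t, (σ q t) ^ 2 * (x j t) ^ 2) + ∑ t, a i t * a j t) := by
      simp only [ha, Finset.mul_sum, ← Finset.sum_add_distrib]
      exact Finset.sum_congr rfl fun t _ => by ring
    have e2 : ⟪x i - x j, μ q⟫ = ⟪x i, μ q⟫ - ⟪x j, μ q⟫ := inner_sub_left _ _ _
    rw [e1, Real.exp_add, Real.exp_add, e2, Real.cos_sub]
    simp only [hb1, hb2]
    ring
  simp_rw [hterm, Finset.sum_add_distrib]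
  exact add_nonneg (exp_inner_psd' a b1) (exp_inner_psd' a b2)
end
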